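/- Let A be a Noetherian integrally closed integral domain. Then A equals the intersection, inside its fraction field, of its localizations at all height-one prime ideals: A = ⋂_{ht P = 1} A_P. -/

import Mathlib

/-- A Noetherian integrally closed integral domain `A` equals the intersection,
inside its fraction field, of its localizations at all height-one primes: an
element `x` of the fraction field lies in `A_P` for every prime `P` of height one
(i.e. `P ≠ 0` and the only prime strictly below `P` is `0`) if and only if `x`
comes from `A`. -/
theorem mem_range_iff_mem_all_height_one_localizations
    {A : Type*} [CommRing A] [IsDomain A] [IsNoetherianRing A] [IsIntegrallyClosed A]
    (x : FractionRing A) :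
    (∀ P : Ideal A, P.IsPrime → P ≠ ⊥ →
        (∀ Q : Ideal A, Q.IsPrime → Q < P → Q = ⊥) →
        ∃ a s : A, s ∉ P ∧
          x * algebraMap A (FractionRing A) s = algebraMap A (FractionRing A) a) ↔
      ∃ a : A, x = algebraMap A (FractionRing A) a := by
  constructor
  · intro h
    by_contra hx
    push_neg at hx
    obtain ⟨⟨a, b⟩, hab⟩ := IsLocalization.surj (nonZeroDivisors A) x
    simp only at hab
    have hb0 : (b : A) ≠ 0 := nonZeroDivisors.coe_ne_zero b
    set I : Ideal A := Ideal.span {(b : A)} with hIdef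
    have hinj : Function.Injective (algebraMap A (FractionRing A)) :=
      IsFractionRing.injective A (FractionRing A)
    have hbK : algebraMap A (FractionRing A) b ≠ 0 := fun h0 => hb0 (hinj (by simpa using h0))
    have ha0 : (Ideal.Quotient.mk I a : A ⧸ I) ≠ 0 := by
      intro h0
      rw [Ideal.Quotient.eq_zero_iff_mem, Ideal.mem_span_singleton] at h0
      obtain ⟨t, rfl⟩ := h0
      refine hx t ?_
      have : x * algebraMap A (FractionRing A) b =
          algebraMap A (FractionRing A) t * algebraMap A (FractionRing A) b := by
        rw [hab, map_mul]; ring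
      exact mul_right_cancel₀ hbK this
    obtain ⟨P, hPa, hle⟩ :=
      exists_le_isAssociatedPrime_of_isNoetherianRing A (Ideal.Quotient.mk I a) ha0
    obtain ⟨hPprime, c', hc'⟩ := isAssociatedPrime_iff.mp hPa
    obtain ⟨c, rfl⟩ := Ideal.Quotient.mk_surjective c'
    have hmem : ∀ s : A, s ∈ P ↔ s * c ∈ I := by
      intro s
      rw [hc', Submodule.mem_colon_singleton, Submodule.mem_bot]
      have : s • (Ideal.Quotient.mk I c) = Ideal.Quotient.mk I (s * c) := rfl
      rw [this, Ideal.Quotient.eq_zero_iff_mem]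
    have hbP : (b : A) ∈ P := (hmem b).mpr (Ideal.mem_span_singleton.mpr ⟨c, rfl⟩)
    have hPbot : P ≠ ⊥ := fun h0 => hb0 (by simpa [h0] using hbP)
    have hcI : c ∉ I := by
      intro hc
      exact hPprime.ne_top (Ideal.eq_top_iff_one P |>.mpr ((hmem 1).mpr (by simpa using hc)))
    -- integrality argument: find p ∈ P, d ∉ P with p * c = b * d
    set N : Submodule A (FractionRing A) :=
      Submodule.map (Algebra.linearMap A (FractionRing A)) P with hNdef
    have hNfg : N.FG := (IsNoetherian.noetherian (P : Submodule A A)).map _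
    have hNne : N ≠ ⊥ := by
      intro h0
      have : algebraMap A (FractionRing A) b ∈ N := ⟨b, hbP, rfl⟩
      rw [h0, Submodule.mem_bot] at this
      exact hbK this
    obtain ⟨z, hzmul⟩ : ∃ z : FractionRing A,
        z * algebraMap A (FractionRing A) b = algebraMap A (FractionRing A) c :=
      ⟨algebraMap A (FractionRing A) c * (algebraMap A (FractionRing A) b)⁻¹,
        inv_mul_cancel_right₀ hbK _⟩
    have hz : ¬ ∀ n ∈ N, z • n ∈ N := by
      intro hsm
      have hzint : IsIntegral A z := isIntegral_of_smul_mem_submodule N hNne hNfg z hsm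
      obtain ⟨d₀, hd₀⟩ := IsIntegrallyClosed.isIntegral_iff.mp hzint
      apply hcI
      rw [Ideal.mem_span_singleton]
      refine ⟨d₀, hinj ?_⟩
      rw [map_mul, hd₀, ← hzmul]; ring
    push_neg at hz
    obtain ⟨n, hnN, hznN⟩ := hz
    obtain ⟨p, hpP, rfl⟩ := hnN
    obtain ⟨d, hd⟩ := Ideal.mem_span_singleton.mp ((hmem p).mp hpP)
    have hzd : z • (Algebra.linearMap A (FractionRing A)) p = algebraMap A (FractionRing A) d := by
      apply mul_right_cancel₀ hbK
      show z * algebraMap A (FractionRing A) p * algebraMap A (FractionRing A) b = _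
      calc z * algebraMap A (FractionRing A) p * algebraMap A (FractionRing A) b
          = (z * algebraMap A (FractionRing A) b) * algebraMap A (FractionRing A) p := by ring
        _ = algebraMap A (FractionRing A) c * algebraMap A (FractionRing A) p := by rw [hzmul]
        _ = algebraMap A (FractionRing A) (b * d) := by rw [← map_mul, mul_comm c p, hd]
        _ = algebraMap A (FractionRing A) d * algebraMap A (FractionRing A) b := by
            rw [map_mul]; ring
    have hdP : d ∉ P := by
      intro hdP
      exact hznN (hzd ▸ ⟨d, hdP, rfl⟩)
    -- P has height one
    have ht1 : ∀ Q : Ideal A, Q.IsPrime → Q < P → Q = ⊥ := by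
      intro Q hQ hQP
      set R := Localization.AtPrime P with hRdef
      haveI : IsNoetherianRing R := by
        exact IsLocalization.isNoetherianRing P.primeCompl R ‹IsNoetherianRing A›
      set φ := algebraMap A R with hφdef
      have hcompl : P.primeCompl ≤ nonZeroDivisors A := fun s hs =>
        mem_nonZeroDivisors_of_ne_zero (fun h0 => hs (h0 ▸ P.zero_mem))
      have hφinj : Function.Injective φ := IsLocalization.injective R hcompl
      have hPp : P.map φ ≤ Ideal.span {φ p} := by
        rw [Ideal.map_le_iff_le_comap]
        intro t htP
        obtain ⟨e, he⟩ := Ideal.mem_span_singleton.mp ((hmem t).mp htP)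
        have htd : t * d = p * e := by
          apply mul_left_cancel₀ hb0
          linear_combination p * he - t * hd
        obtain ⟨u, hu⟩ := IsLocalization.map_units R (⟨d, hdP⟩ : P.primeCompl)
        rw [Ideal.mem_comap, Ideal.mem_span_singleton]
        refine ⟨φ e * ↑u⁻¹, ?_⟩
        have hmul : φ t * φ d = φ p * φ e := by
          rw [← map_mul, ← map_mul, htd]
        have h1 : φ d * ↑u⁻¹ = 1 := by rw [← hu]; exact u.mul_inv
        calc φ t = φ t * (φ d * ↑u⁻¹) := by rw [h1, mul_one]
          _ = (φ t * φ d) * ↑u⁻¹ := by ring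
          _ = (φ p * φ e) * ↑u⁻¹ := by rw [hmul]
          _ = φ p * (φ e * ↑u⁻¹) := by ring
      have hdisj : Disjoint (P.primeCompl : Set A) (Q : Set A) := by
        rw [Set.disjoint_left]
        exact fun s hs hsQ => hs (hQP.le hsQ)
      have hQRprime : (Q.map φ).IsPrime :=
        IsLocalization.isPrime_of_isPrime_disjoint P.primeCompl R Q hQ hdisj
      have hcomap : Ideal.comap φ (Q.map φ) = Q :=
        IsLocalization.comap_map_of_isPrime_disjoint P.primeCompl R hQ hdisj
      have hpQ : φ p ∉ Q.map φ := by
        intro hp'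
        refine hQP.not_ge (fun t ht => ?_)
        have h2 : φ t ∈ Ideal.span {φ p} := hPp (Ideal.mem_map_of_mem φ ht)
        have h3 : Ideal.span {φ p} ≤ Q.map φ := by
          rw [Ideal.span_le, Set.singleton_subset_iff]; exact hp'
        rw [← hcomap]; exact h3 h2
      have hNak : Q.map φ ≤ (P.map φ) • (Q.map φ) := by
        intro q' hq'
        obtain ⟨r, hr⟩ := Ideal.mem_span_singleton.mp (hPp (Ideal.map_mono hQP.le hq'))
        have hrQ : r ∈ Q.map φ := (hQRprime.mem_or_mem (hr ▸ hq')).resolve_left hpQ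
        exact hr ▸ Submodule.smul_mem_smul (Ideal.mem_map_of_mem φ hpP) hrQ
      have hjac : P.map φ ≤ Ideal.jacobson ⊥ := by
        rw [hφdef, Localization.AtPrime.map_eq_maximalIdeal]
        exact IsLocalRing.maximalIdeal_le_jacobson ⊥
      have hbot := Submodule.eq_bot_of_le_smul_of_le_jacobson_bot (P.map φ) (Q.map φ)
        (IsNoetherian.noetherian _) hNak hjac
      rw [← hcomap, hbot]
      rw [eq_bot_iff]
      intro t ht
      rw [Ideal.mem_comap, Ideal.mem_bot] at ht
      exact Ideal.mem_bot.mpr (hφinj (by simpa using ht))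
    obtain ⟨a', s, hsP, heq⟩ := h P hPprime hPbot ht1
    apply hsP
    apply hle
    rw [Submodule.mem_colon_singleton, Submodule.mem_bot]
    have hsa : s * a = a' * b := by
      apply hinj
      rw [map_mul, map_mul, ← hab, ← heq]; ring
    show Ideal.Quotient.mk I (s * a) = 0
    rw [Ideal.Quotient.eq_zero_iff_mem, hsa, Ideal.mem_span_singleton]
    exact ⟨a', mul_comm _ _⟩
  · rintro ⟨a, rfl⟩ P hP _ _
    exact ⟨a, 1, (Ideal.ne_top_iff_one P).mp hP.ne_top, by simp⟩
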